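/- (Regime B, interior misbehavior.) Suppose p^t_l < Δc^θ(0). Then in any PBE (σ*, β*), the type l misbehavior rate satisfies 0 < σ^t*_l < 1. -/
import Mathlib


open Set

/-- Perfect Bayesian equilibrium of the two-server misbehavior-inspection signaling game.
The strategy profile is `(sh, sl, dH, dL)` (misbehavior rates of types `h` and `l`, and the
operator's inspection probabilities on servers `H` and `L`) and the belief assessment is
`(bhH, blH, bhL, blL)`. -/
def IsPBE (θ pth ptl pd Fh Fl : ℝ) (cH cL : ℝ → ℝ → ℝ)
    (sh sl dH dL bhH blH bhL blL : ℝ) : Prop :=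
  sh ∈ Icc (0:ℝ) 1 ∧ sl ∈ Icc (0:ℝ) 1 ∧ dH ∈ Icc (0:ℝ) 1 ∧ dL ∈ Icc (0:ℝ) 1 ∧
  bhH ∈ Icc (0:ℝ) 1 ∧ blH = 1 - bhH ∧ bhL ∈ Icc (0:ℝ) 1 ∧ blL = 1 - bhL ∧
  -- sequential rationality of type h agents
  (0 < sh → -(cL sh sl) - pth - Fh * dL ≥ -(cH sh sl)) ∧
  (sh < 1 → -(cL sh sl) - pth - Fh * dL ≤ -(cH sh sl)) ∧
  -- sequential rationality of type l agents
  (0 < sl → -(cH sh sl) - ptl - Fl * dH ≥ -(cL sh sl)) ∧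
  (sl < 1 → -(cH sh sl) - ptl - Fl * dH ≤ -(cL sh sl)) ∧
  -- operator optimality on servers H and L
  (∀ x ∈ Icc (0:ℝ) 1, (-pd + Fl * blH) * x ≤ (-pd + Fl * blH) * dH) ∧
  (∀ x ∈ Icc (0:ℝ) 1, (-pd + Fh * bhL) * x ≤ (-pd + Fh * bhL) * dL) ∧
  -- consistency of beliefs (Bayes' rule)
  (0 < θ * (1 - sh) + (1 - θ) * sl →
    bhH = θ * (1 - sh) / (θ * (1 - sh) + (1 - θ) * sl)) ∧
  (0 < θ * sh + (1 - θ) * (1 - sl) →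
    bhL = θ * sh / (θ * sh + (1 - θ) * (1 - sl)))

/-- Regime B: if `pᵗ_l < Δcᵗʰ(0)`, then in any PBE the type l misbehavior rate is
interior: `0 < sl < 1`. -/
theorem regime_B_interior
    (θ pth ptl pd Fh Fl : ℝ) (cH cL : ℝ → ℝ → ℝ)
    (hθ : θ ∈ Ioo (0:ℝ) 1) (hpth : 0 ≤ pth) (hptl : 0 < ptl)
    (hpd : 0 < pd) (hFh : 0 ≤ Fh) (hFl : 0 ≤ Fl)
    (hA1 : cH 0 0 < cL 0 0 ∧ cL 0 1 < cH 0 1)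
    (hA2Hh : ∀ y ∈ Icc (0:ℝ) 1, StrictAntiOn (fun x => cH x y) (Icc 0 1))
    (hA2Hl : ∀ x ∈ Icc (0:ℝ) 1, StrictMonoOn (fun y => cH x y) (Icc 0 1))
    (hA2Lh : ∀ y ∈ Icc (0:ℝ) 1, StrictMonoOn (fun x => cL x y) (Icc 0 1))
    (hA2Ll : ∀ x ∈ Icc (0:ℝ) 1, StrictAntiOn (fun y => cL x y) (Icc 0 1))
    (sh sl dH dL bhH blH bhL blL : ℝ)
    (hPBE : IsPBE θ pth ptl pd Fh Fl cH cL sh sl dH dL bhH blH bhL blL)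
    (hreg : ptl < cL 0 0 - cH 0 0) :
    0 < sl ∧ sl < 1 := by

  obtain ⟨hsh, hsl, hdH, hdL, hbhH, hblH, hbhL, hblL, hSRh1, hSRh2,
    hSRl1, hSRl2, hOpH, hOpL, hBH, hBL⟩ := hPBE
  have h01 : (0:ℝ) ∈ Icc (0:ℝ) 1 := ⟨le_refl 0, zero_le_one⟩
  have h11 : (1:ℝ) ∈ Icc (0:ℝ) 1 := ⟨zero_le_one, le_refl 1⟩
  constructor
  · -- 0 < sl
    by_contra hc
    push_neg at hc
    have hsl0 : sl = 0 := le_antisymm hc hsl.1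
    subst hsl0
    rcases lt_or_eq_of_le hsh.2 with hsh1 | hsh1
    · -- sh < 1 : beliefs at H put all weight on h, so dH = 0
      have hden : 0 < θ * (1 - sh) + (1 - θ) * 0 := by
        have := hθ.1
        nlinarith
      have hne : θ * (1 - sh) ≠ 0 := ne_of_gt (by nlinarith [hθ.1, hθ.2])
      have hbhH1 : bhH = 1 := by
        rw [hBH hden, mul_zero, add_zero, div_self hne]
      have hblH0 : blH = 0 := by rw [hblH, hbhH1]; ring
      have hdH0 : dH = 0 := by
        have := hOpH 0 h01
        rw [hblH0] at this
        simp at this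
        nlinarith [hdH.1]
      have hrat := hSRl2 zero_lt_one
      rw [hdH0] at hrat
      have hL : cL 0 0 ≤ cL sh 0 :=
        (hA2Lh 0 h01).monotoneOn h01 ⟨hsh.1, hsh.2⟩ hsh.1
      have hH : cH sh 0 ≤ cH 0 0 :=
        (hA2Hh 0 h01).antitoneOn h01 ⟨hsh.1, hsh.2⟩ hsh.1
      nlinarith
    · -- sh = 1 : type h prefers L but costs contradict
      subst hsh1
      have hrat := hSRh1 zero_lt_one
      have hH : cH 1 0 < cH 0 0 := (hA2Hh 0 h01) h01 h11 zero_lt_one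
      have hL : cL 0 0 < cL 1 0 := (hA2Lh 0 h01) h01 h11 zero_lt_one
      nlinarith [mul_nonneg hFh hdL.1]
  · -- sl < 1
    by_contra hc
    push_neg at hc
    have hsl1 : sl = 1 := le_antisymm hsl.2 hc
    subst hsl1
    rcases lt_or_eq_of_le hsh.1 with hsh0 | hsh0
    · -- 0 < sh : both types strictly prefer the other's server, contradiction
      have hrath := hSRh1 hsh0
      have hratl := hSRl1 zero_lt_one
      nlinarith [mul_nonneg hFh hdL.1, mul_nonneg hFl hdH.1]
    · -- sh = 0 : contradicts A1 at (0,1)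
      have hratl := hSRl1 zero_lt_one
      rw [← hsh0] at hratl
      nlinarith [mul_nonneg hFl hdH.1, hA1.2]
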